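/- Let A = {0, a_2, ..., a_n} with 0 < a_2 < ... < a_n and gcd(a_2, ..., a_n) = 1, and suppose sA = C_1 ⊔ [c_1, s·a_n - c_2] ⊔ (s·a_n - C_2) for all s ≥ σ, with C_1 ⊆ [0, c_1-2], C_2 ⊆ [0, c_2-2]. Then c_1 is the conductor of the numerical semigroup Γ_1 = ⟨a_2, ..., a_n⟩ and C_1 = Γ_1 ∩ [0, c_1 - 2]. -/

import Mathlib

open Finset Pointwise

/-- The s-fold iterated sumset of a finite set of natural numbers; `sumset A 0 = {0}`. -/
def sumset (A : Finset ℕ) : ℕ → Finset ℕ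
  | 0 => {0}
  | s + 1 => A + sumset A s

lemma sumset_mono {A : Finset ℕ} (h0 : 0 ∈ A) : Monotone (sumset A) := by
  apply monotone_nat_of_le_succ
  intro s x hx
  have := Finset.add_mem_add h0 hx
  simpa [sumset] using this

lemma mem_sumset_add {A : Finset ℕ} {x y : ℕ} {s t : ℕ}
    (hx : x ∈ sumset A s) (hy : y ∈ sumset A t) : x + y ∈ sumset A (s + t) := by
  induction s generalizing x with
  | zero =>
    simp only [sumset, Finset.mem_singleton] at hx
    subst hx; simpa using hy
  | succ n ih =>
    rw [sumset] at hx
    obtain ⟨a, ha, z, hz, rfl⟩ := Finset.mem_add.mp hx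
    have h1 : a + (z + y) ∈ sumset A (n + t + 1) := Finset.add_mem_add ha (ih hz)
    have : n + 1 + t = n + t + 1 := by ring
    rw [this]
    simpa [add_assoc] using h1

lemma sumset_subset_closure {A : Finset ℕ} {x : ℕ} {s : ℕ} (hx : x ∈ sumset A s) :
    x ∈ AddSubmonoid.closure ((A.erase 0 : Finset ℕ) : Set ℕ) := by
  induction s generalizing x with
  | zero =>
    simp only [sumset, Finset.mem_singleton] at hx
    subst hx; exact zero_mem _
  | succ n ih =>
    rw [sumset] at hx
    obtain ⟨a, ha, z, hz, rfl⟩ := Finset.mem_add.mp hx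
    have ha' : a ∈ AddSubmonoid.closure ((A.erase 0 : Finset ℕ) : Set ℕ) := by
      rcases eq_or_ne a 0 with rfl | h
      · exact zero_mem _
      · exact AddSubmonoid.subset_closure (by simp [Finset.mem_erase, h, ha])
    exact add_mem ha' (ih hz)

lemma closure_mem_sumset {A : Finset ℕ} {x : ℕ}
    (hx : x ∈ AddSubmonoid.closure ((A.erase 0 : Finset ℕ) : Set ℕ)) :
    ∃ s, x ∈ sumset A s := by
  induction hx using AddSubmonoid.closure_induction with
  | mem a ha =>
    refine ⟨1, ?_⟩
    have ha' : a ∈ A := by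
      simp only [Finset.coe_erase, Set.mem_diff, Finset.mem_coe] at ha
      exact ha.1
    have : a + 0 ∈ A + sumset A 0 := Finset.add_mem_add ha' (by simp [sumset])
    simpa [sumset] using this
  | zero => exact ⟨0, by simp [sumset]⟩
  | add a b _ _ iha ihb =>
    obtain ⟨s, hs⟩ := iha
    obtain ⟨t, ht⟩ := ihb
    exact ⟨s + t, mem_sumset_add hs ht⟩

theorem stmt9 (A : Finset ℕ) (h0 : 0 ∈ A) (hn : 2 ≤ A.card) (hgcd : A.gcd id = 1)
    (an : ℕ) (han : an = A.max' ⟨0, h0⟩)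
    (σ c1 c2 : ℕ) (C1 C2 : Finset ℕ)
    (hC1 : ∀ x ∈ C1, x + 2 ≤ c1) (hC2 : ∀ x ∈ C2, x + 2 ≤ c2)
    (hdec : ∀ s ≥ σ,
      sumset A s = C1 ∪ Finset.Icc c1 (s * an - c2) ∪ C2.image (fun c => s * an - c) ∧
      Disjoint C1 (Finset.Icc c1 (s * an - c2)) ∧
      Disjoint C1 (C2.image (fun c => s * an - c)) ∧
      Disjoint (Finset.Icc c1 (s * an - c2)) (C2.image (fun c => s * an - c)))
    (Γ1 : AddSubmonoid ℕ)
    (hΓ1 : Γ1 = AddSubmonoid.closure ((A.erase 0 : Finset ℕ) : Set ℕ)) :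
    (∀ m : ℕ, c1 ≤ m → m ∈ Γ1) ∧
    (∀ c : ℕ, (∀ m : ℕ, c ≤ m → m ∈ Γ1) → c1 ≤ c) ∧
    (∀ x : ℕ, x ∈ C1 ↔ x ∈ Γ1 ∧ x + 2 ≤ c1) := by
  -- an ≥ 1
  have han1 : 1 ≤ an := by
    obtain ⟨a, ha, hane⟩ : ∃ a ∈ A, a ≠ 0 := by
      by_contra h
      push_neg at h
      have : A ⊆ {0} := fun x hx => Finset.mem_singleton.mpr (h x hx)
      have := Finset.card_le_card this
      simp at this
      omega
    have : a ≤ A.max' ⟨0, h0⟩ := Finset.le_max' A a ha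
    omega
  -- key: membership in Γ1 iff in some sumset
  have hmemiff : ∀ x : ℕ, x ∈ Γ1 ↔ ∃ s, x ∈ sumset A s := by
    intro x
    rw [hΓ1]
    exact ⟨fun h => closure_mem_sumset h, fun ⟨s, hs⟩ => sumset_subset_closure hs⟩
  -- Key characterization for large s
  have key : ∀ x : ℕ, x < c1 → x ∉ C1 → x ∉ Γ1 := by
    intro x hx hxC1 hxΓ
    obtain ⟨s0, hs0⟩ := (hmemiff x).mp hxΓ
    set s := max s0 (σ + c1 + c2) with hs
    have hsσ : σ ≤ s := le_trans (by omega) (le_max_right _ _)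
    have hsan : c1 + c2 ≤ s * an := by
      calc c1 + c2 ≤ s := le_trans (by omega) (le_max_right _ _)
        _ = s * 1 := (mul_one s).symm
        _ ≤ s * an := Nat.mul_le_mul_left s han1
    have hxs : x ∈ sumset A s := sumset_mono h0 (le_max_left _ _) hs0
    obtain ⟨heq, -, -, -⟩ := hdec s hsσ
    rw [heq] at hxs
    rcases Finset.mem_union.mp hxs with hxs | hxs
    · rcases Finset.mem_union.mp hxs with hxs | hxs
      · exact hxC1 hxs
      · rw [Finset.mem_Icc] at hxs; omega
    · obtain ⟨c, hc, hceq⟩ := Finset.mem_image.mp hxs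
      have := hC2 c hc
      omega
  refine ⟨?_, ?_, ?_⟩
  · -- every m ≥ c1 is in Γ1
    intro m hm
    set s := σ + m + c2 with hs
    have hsσ : σ ≤ s := by omega
    have hsan : m + c2 ≤ s * an := by
      calc m + c2 ≤ s := by omega
        _ = s * 1 := (mul_one s).symm
        _ ≤ s * an := Nat.mul_le_mul_left s han1
    obtain ⟨heq, -, -, -⟩ := hdec s hsσ
    have hm' : m ∈ sumset A s := by
      rw [heq]
      apply Finset.mem_union_left
      apply Finset.mem_union_right
      rw [Finset.mem_Icc]
      omega
    exact (hmemiff m).mpr ⟨s, hm'⟩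
  · -- c1 is minimal
    intro c hc
    by_contra h
    push_neg at h
    have hc1pos : 1 ≤ c1 := by omega
    have hmem : c1 - 1 ∈ Γ1 := hc (c1 - 1) (by omega)
    have hnC1 : c1 - 1 ∉ C1 := fun hmem' => by have := hC1 _ hmem'; omega
    exact key (c1 - 1) (by omega) hnC1 hmem
  · -- C1 = Γ1 ∩ [0, c1-2]
    intro x
    constructor
    · intro hx
      refine ⟨?_, hC1 x hx⟩
      obtain ⟨heq, -, -, -⟩ := hdec σ le_rfl
      have : x ∈ sumset A σ := by
        rw [heq]
        exact Finset.mem_union_left _ (Finset.mem_union_left _ hx)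
      exact (hmemiff x).mpr ⟨σ, this⟩
    · rintro ⟨hxΓ, hxle⟩
      by_contra hxC1
      exact key x (by omega) hxC1 hxΓ
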